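/- arXiv:2301.12401 — 3 statements merged into one kernel-verified Lean document; each statement's English description precedes it below -/
import Mathlib

section
/- With orthonormal POD basis {φ_k}_{k=1}^{N} constructed from the Gram matrix eigenvectors as above, the POD projection error equals the sum of the discarded eigenvalues: Σ_{i=1}^{N_s} ‖T_i - Σ_{k=1}^{N} ⟨T_i, φ_k⟩ φ_k‖^2 = Σ_{k=N+1}^{N_s} λ_k, where λ_1 ≥ ⋯ ≥ λ_{N_s} ≥ 0 are the eigenvalues of the Gram matrix. -/
open scoped RealInnerProductSpace
open Matrix

/-- POD projection error identity: with the orthonormal POD basis `{φ_k}`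
constructed from the eigenvectors of the snapshot Gram matrix
(`φ_k = λ_k^{-1/2} Σ_j (q_k)_j T_j` when `λ_k > 0`, the terms with `λ_k = 0`
vanishing), the total projection error onto the first `N` modes equals the sum
of the discarded eigenvalues. -/
theorem pod_projection_error_eq_discarded_eigenvalues {H : Type*}
    [NormedAddCommGroup H] [InnerProductSpace ℝ H]
    (Ns : ℕ) (T : Fin Ns → H)
    (C : Matrix (Fin Ns) (Fin Ns) ℝ)
    (hC : ∀ i j, C i j = ⟪T i, T j⟫)
    (lam : Fin Ns → ℝ) (q : Fin Ns → (Fin Ns → ℝ))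
    (hlam : ∀ k, 0 ≤ lam k)
    (hord : ∀ k l : Fin Ns, k ≤ l → lam l ≤ lam k)
    (heig : ∀ k, C.mulVec (q k) = lam k • q k)
    (horth : ∀ k l, (∑ j, q k j * q l j) = if k = l then 1 else 0)
    (φ : Fin Ns → H)
    (hφ : ∀ k, φ k = if 0 < lam k
        then (Real.sqrt (lam k))⁻¹ • ∑ j, q k j • T j else 0)
    (N : ℕ) (hN : N ≤ Ns) :
    ∑ i, ‖T i - ∑ k ∈ Finset.univ.filter (fun k : Fin Ns => (k : ℕ) < N),
          ⟪T i, φ k⟫ • φ k‖ ^ 2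
      = ∑ k ∈ Finset.univ.filter (fun k : Fin Ns => N ≤ (k : ℕ)), lam k := by
  classical
  -- eigen relation in sum form
  have hCmul : ∀ k i, (∑ j, ⟪T i, T j⟫ * q k j) = lam k * q k i := by
    intro k i
    have h := congrFun (heig k) i
    simpa [Matrix.mulVec, dotProduct, hC] using h
  -- column orthonormality
  have hcol : ∀ i j : Fin Ns, (∑ k, q k i * q k j) = if i = j then 1 else 0 := by
    intro i j
    set Q : Matrix (Fin Ns) (Fin Ns) ℝ := Matrix.of q with hQ
    have hQQ : Q * Qᵀ = 1 := by
      ext k l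
      simpa [Matrix.mul_apply, Matrix.one_apply, hQ] using horth k l
    have hQTQ : Qᵀ * Q = 1 := mul_eq_one_comm.mp hQQ
    have h := congrFun (congrFun hQTQ i) j
    simpa [Matrix.mul_apply, Matrix.one_apply, hQ, Matrix.transpose_apply] using h
  -- inner products with φ
  have hinner : ∀ i k, ⟪T i, φ k⟫ = Real.sqrt (lam k) * q k i := by
    intro i k
    rw [hφ k]
    by_cases h : 0 < lam k
    · rw [if_pos h, real_inner_smul_right, inner_sum]
      simp_rw [real_inner_smul_right]
      have h1 : (∑ j, q k j * ⟪T i, T j⟫) = lam k * q k i := by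
        rw [← hCmul k i]; exact Finset.sum_congr rfl fun j _ => mul_comm _ _
      rw [h1]
      have hs : Real.sqrt (lam k) * Real.sqrt (lam k) = lam k := Real.mul_self_sqrt h.le
      have hs0 : Real.sqrt (lam k) ≠ 0 := by positivity
      rw [show lam k * q k i = Real.sqrt (lam k) * (Real.sqrt (lam k) * q k i) by
          rw [← mul_assoc, hs],
        inv_mul_cancel_left₀ hs0]
    · have h0 : lam k = 0 := le_antisymm (not_lt.mp h) (hlam k)
      simp [h0]
  have hphi : ∀ k l, ⟪φ k, φ l⟫ = if k = l then (if 0 < lam k then (1:ℝ) else 0) else 0 := by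
    intro k l
    by_cases hl : 0 < lam l
    · by_cases hk : 0 < lam k
      · rw [hφ k, if_pos hk, real_inner_smul_left, sum_inner]
        simp_rw [real_inner_smul_left, hinner]
        have h1 : (∑ j, q k j * (Real.sqrt (lam l) * q l j))
            = Real.sqrt (lam l) * (if k = l then 1 else 0) := by
          rw [← horth k l, Finset.mul_sum]
          exact Finset.sum_congr rfl fun j _ => by ring
        rw [h1]
        by_cases hkl : k = l
        · subst hkl
          rw [if_pos rfl, if_pos rfl, if_pos hk]
          have hs0 : Real.sqrt (lam k) ≠ 0 := by positivity
          field_simp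
        · simp [hkl]
      · have h0 : lam k = 0 := le_antisymm (not_lt.mp hk) (hlam k)
        have : φ k = 0 := by rw [hφ k]; simp [hk]
        rw [this, inner_zero_left]
        by_cases hkl : k = l
        · subst hkl; exact absurd hl hk
        · simp [hkl]
    · have : φ l = 0 := by rw [hφ l]; simp [hl]
      rw [this, inner_zero_right]
      by_cases hkl : k = l
      · subst hkl; simp [hl]
      · simp [hkl]
  set F := Finset.univ.filter (fun k : Fin Ns => (k : ℕ) < N) with hF
  -- each term
  have hterm : ∀ i, ‖T i - ∑ k ∈ F, ⟪T i, φ k⟫ • φ k‖ ^ 2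
      = ⟪T i, T i⟫ - ∑ k ∈ F, lam k * (q k i)^2 := by
    intro i
    set s := ∑ k ∈ F, ⟪T i, φ k⟫ • φ k with hsdef
    have hc2 : ∀ k, ⟪T i, φ k⟫ ^ 2 = lam k * (q k i)^2 := by
      intro k
      rw [hinner]
      rw [mul_pow, Real.sq_sqrt (hlam k)]
    have hTs : ⟪T i, s⟫ = ∑ k ∈ F, lam k * (q k i)^2 := by
      rw [hsdef, inner_sum]
      refine Finset.sum_congr rfl fun k _ => ?_
      rw [real_inner_smul_right, ← sq, hc2]
    have hss : ⟪s, s⟫ = ∑ k ∈ F, lam k * (q k i)^2 := by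
      rw [hsdef, sum_inner]
      refine Finset.sum_congr rfl fun k _ => ?_
      rename_i hkF
      rw [real_inner_smul_left, inner_sum]
      simp_rw [real_inner_smul_right, hphi, mul_ite, mul_zero]
      rw [Finset.sum_ite_eq F k]
      rw [if_pos hkF]
      by_cases hk : 0 < lam k
      · rw [if_pos hk, mul_one, ← sq, hc2]
      · have h0 : lam k = 0 := le_antisymm (not_lt.mp hk) (hlam k)
        simp [hk, h0]
    have hexp : ‖T i - s‖ ^ 2 = ‖T i‖^2 - 2 * ⟪T i, s⟫ + ‖s‖^2 := by
      rw [← real_inner_self_eq_norm_sq, ← real_inner_self_eq_norm_sq, ← real_inner_self_eq_norm_sq]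
      rw [inner_sub_sub_self, real_inner_comm s (T i)]
      ring
    rw [hexp, hTs, ← real_inner_self_eq_norm_sq, ← real_inner_self_eq_norm_sq, hss]
    ring
  -- sum over i
  simp_rw [hterm]
  rw [Finset.sum_sub_distrib]
  have htr : (∑ i, ⟪T i, T i⟫) = ∑ k, lam k := by
    have hdiag : ∀ i : Fin Ns, ⟪T i, T i⟫ = ∑ k, lam k * (q k i)^2 := by
      intro i
      have h1 : (∑ k, lam k * q k i * q k i) = ∑ k, (∑ j, ⟪T i, T j⟫ * q k j) * q k i := by
        refine Finset.sum_congr rfl fun k _ => ?_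
        rw [hCmul]
      have h2 : (∑ k, (∑ j, ⟪T i, T j⟫ * q k j) * q k i)
          = ∑ j, ⟪T i, T j⟫ * ∑ k, q k j * q k i := by
        simp_rw [Finset.sum_mul, Finset.mul_sum]
        rw [Finset.sum_comm]
        exact Finset.sum_congr rfl fun j _ => Finset.sum_congr rfl fun k _ => by ring
      have h3 : (∑ j, ⟪T i, T j⟫ * ∑ k, q k j * q k i) = ⟪T i, T i⟫ := by
        simp_rw [hcol]
        simp
      calc ⟪T i, T i⟫ = ∑ k, lam k * q k i * q k i := by rw [h1, h2, h3]
        _ = ∑ k, lam k * (q k i)^2 := by refine Finset.sum_congr rfl fun k _ => by ring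
    simp_rw [hdiag]
    rw [Finset.sum_comm]
    refine Finset.sum_congr rfl fun k _ => ?_
    rw [← Finset.mul_sum]
    have : (∑ i, (q k i)^2) = 1 := by
      have := horth k k
      simpa [sq] using this
    rw [this, mul_one]
  have hsw : (∑ i, ∑ k ∈ F, lam k * (q k i)^2) = ∑ k ∈ F, lam k := by
    rw [Finset.sum_comm]
    refine Finset.sum_congr rfl fun k _ => ?_
    rw [← Finset.mul_sum]
    have : (∑ i, (q k i)^2) = 1 := by simpa [sq] using horth k k
    rw [this, mul_one]
  rw [htr, hsw]
  have hsplit : (∑ k, lam k) = (∑ k ∈ F, lam k) +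
      ∑ k ∈ Finset.univ.filter (fun k : Fin Ns => N ≤ (k : ℕ)), lam k := by
    rw [hF]
    rw [← Finset.sum_filter_add_sum_filter_not Finset.univ (fun k : Fin Ns => (k : ℕ) < N)]
    congr 1
    apply Finset.sum_congr _ fun _ _ => rfl
    ext k; simp [not_lt]
  rw [hsplit]; ring
end

section
/- Among all rank-N orthonormal families ψ_1,…,ψ_N in H, the POD basis φ_1,…,φ_N minimizes the total projection error E_N(ψ) = Σ_{i=1}^{N_s} ‖T_i - Σ_{k=1}^{N} ⟨T_i, ψ_k⟩ ψ_k‖^2, and the minimum value is Σ_{k=N+1}^{N_s} λ_k. -/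
open scoped RealInnerProductSpace

section aux
variable {H : Type*} [NormedAddCommGroup H] [InnerProductSpace ℝ H]

/-- Pythagoras for a family that is orthonormal-or-zero on `s`. -/
lemma pod_pyth {ι : Type*} (s : Finset ι) (e : ι → H)
    (h0 : ∀ a ∈ s, ∀ b ∈ s, a ≠ b → ⟪e a, e b⟫ = 0)
    (h1 : ∀ a ∈ s, ⟪e a, e a⟫ = 1 ∨ e a = 0) (v : H) :
    ‖v - ∑ a ∈ s, ⟪v, e a⟫ • e a‖ ^ 2 = ‖v‖ ^ 2 - ∑ a ∈ s, ⟪v, e a⟫ ^ 2 := by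
  have hw : ⟪v, ∑ a ∈ s, ⟪v, e a⟫ • e a⟫ = ∑ a ∈ s, ⟪v, e a⟫ ^ 2 := by
    rw [inner_sum]
    exact Finset.sum_congr rfl fun a _ => by rw [real_inner_smul_right]; ring
  have key : ∀ a ∈ s, ⟪e a, ∑ b ∈ s, ⟪v, e b⟫ • e b⟫ = ⟪v, e a⟫ * ⟪e a, e a⟫ := by
    intro a ha
    rw [inner_sum, Finset.sum_eq_single a]
    · rw [real_inner_smul_right]
    · intro b hb hba; rw [real_inner_smul_right, h0 a ha b hb (Ne.symm hba)]; ring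
    · intro h; exact absurd ha h
  have hww : ⟪(∑ a ∈ s, ⟪v, e a⟫ • e a : H), ∑ a ∈ s, ⟪v, e a⟫ • e a⟫
      = ∑ a ∈ s, ⟪v, e a⟫ ^ 2 := by
    rw [sum_inner]
    refine Finset.sum_congr rfl fun a ha => ?_
    rw [real_inner_smul_left, key a ha]
    rcases h1 a ha with h | h
    · rw [h]; ring
    · simp [h]
  have hns : ‖v - ∑ a ∈ s, ⟪v, e a⟫ • e a‖ ^ 2
      = ‖v‖ ^ 2 - 2 * ⟪v, ∑ a ∈ s, ⟪v, e a⟫ • e a⟫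
        + ‖(∑ a ∈ s, ⟪v, e a⟫ • e a : H)‖ ^ 2 := norm_sub_sq_real v _
  rw [hns, hw, ← real_inner_self_eq_norm_sq (∑ a ∈ s, ⟪v, e a⟫ • e a), hww]
  ring

lemma pod_bessel {ι : Type*} (s : Finset ι) (e : ι → H)
    (h0 : ∀ a ∈ s, ∀ b ∈ s, a ≠ b → ⟪e a, e b⟫ = 0)
    (h1 : ∀ a ∈ s, ⟪e a, e a⟫ = 1 ∨ e a = 0) (v : H) :
    ∑ a ∈ s, ⟪v, e a⟫ ^ 2 ≤ ‖v‖ ^ 2 := by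
  have h := pod_pyth s e h0 h1 v
  nlinarith [sq_nonneg ‖v - ∑ a ∈ s, ⟪v, e a⟫ • e a‖]

lemma pod_card_filter (Ns N : ℕ) (hN : N ≤ Ns) :
    (Finset.univ.filter fun k : Fin Ns => (k : ℕ) < N).card = N := by
  have : (Finset.univ.filter fun k : Fin Ns => (k : ℕ) < N)
      = Finset.univ.map (Fin.castLEEmb hN) := by
    ext k
    simp only [Finset.mem_filter, Finset.mem_univ, true_and, Finset.mem_map,
      Fin.castLEEmb_apply]
    constructor
    · intro h; exact ⟨⟨k, h⟩, by simp [Fin.ext_iff]⟩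
    · rintro ⟨a, rfl⟩; simpa using a.isLt
  rw [this, Finset.card_map, Finset.card_univ, Fintype.card_fin]

end aux

/-- POD optimality: among all orthonormal families `ψ_1,…,ψ_N` in `H`, the POD
basis (built from the eigenvectors of the Gram matrix corresponding to the `N`
largest eigenvalues) minimizes the total projection error
`E_N(ψ) = Σ_i ‖T_i - Σ_k ⟨T_i, ψ_k⟩ ψ_k‖²`, and the minimum value equals the
sum of the discarded eigenvalues. -/
theorem pod_optimality {H : Type*}
    [NormedAddCommGroup H] [InnerProductSpace ℝ H]
    (Ns : ℕ) (T : Fin Ns → H)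
    (C : Matrix (Fin Ns) (Fin Ns) ℝ)
    (hC : ∀ i j, C i j = ⟪T i, T j⟫)
    (lam : Fin Ns → ℝ) (q : Fin Ns → (Fin Ns → ℝ))
    (hlam : ∀ k, 0 ≤ lam k)
    (hord : ∀ k l : Fin Ns, k ≤ l → lam l ≤ lam k)
    (heig : ∀ k, C.mulVec (q k) = lam k • q k)
    (horth : ∀ k l, (∑ j, q k j * q l j) = if k = l then 1 else 0)
    (φ : Fin Ns → H)
    (hφ : ∀ k, φ k = if 0 < lam k
        then (Real.sqrt (lam k))⁻¹ • ∑ j, q k j • T j else 0)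
    (N : ℕ) (hN : N ≤ Ns) :
    (∑ i, ‖T i - ∑ k ∈ Finset.univ.filter (fun k : Fin Ns => (k : ℕ) < N),
          ⟪T i, φ k⟫ • φ k‖ ^ 2
        = ∑ k ∈ Finset.univ.filter (fun k : Fin Ns => N ≤ (k : ℕ)), lam k) ∧
    (∀ ψ : Fin N → H, Orthonormal ℝ ψ →
      ∑ i, ‖T i - ∑ k ∈ Finset.univ.filter (fun k : Fin Ns => (k : ℕ) < N),
            ⟪T i, φ k⟫ • φ k‖ ^ 2
        ≤ ∑ i, ‖T i - ∑ k : Fin N, ⟪T i, ψ k⟫ • ψ k‖ ^ 2) := by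
  classical
  have hslsq : ∀ k, Real.sqrt (lam k) * Real.sqrt (lam k) = lam k :=
    fun k => Real.mul_self_sqrt (hlam k)
  -- entrywise eigenvalue equation
  have hCq : ∀ k i, (∑ j, C i j * q k j) = lam k * q k i := by
    intro k i
    have h := congrFun (heig k) i
    simpa [Matrix.mulVec, dotProduct] using h
  -- inner products of raw linear combinations of snapshots
  have hip : ∀ k l, ⟪(∑ j, q k j • T j : H), ∑ j, q l j • T j⟫
      = lam l * (if k = l then 1 else 0) := by
    intro k l
    have e1 : ⟪(∑ j, q k j • T j : H), ∑ j, q l j • T j⟫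
        = ∑ i, q k i * ∑ j, C i j * q l j := by
      rw [sum_inner]
      refine Finset.sum_congr rfl fun i _ => ?_
      rw [real_inner_smul_left, inner_sum]
      congr 1
      refine Finset.sum_congr rfl fun j _ => ?_
      rw [real_inner_smul_right, hC]; ring
    rw [e1]
    calc ∑ i, q k i * ∑ j, C i j * q l j
        = ∑ i, lam l * (q k i * q l i) := by
          refine Finset.sum_congr rfl fun i _ => ?_
          rw [hCq l i]; ring
      _ = lam l * ∑ i, q k i * q l i := by rw [Finset.mul_sum]
      _ = lam l * (if k = l then 1 else 0) := by rw [horth]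
  have hzero : ∀ k, lam k = 0 → (∑ j, q k j • T j : H) = 0 := by
    intro k hk
    have h := hip k k
    rw [hk, zero_mul] at h
    exact inner_self_eq_zero.mp h
  have hφ0 : ∀ k, ¬ 0 < lam k → φ k = 0 := fun k hk => by rw [hφ k, if_neg hk]
  have hlam0 : ∀ k, ¬ 0 < lam k → lam k = 0 :=
    fun k hk => le_antisymm (not_lt.mp hk) (hlam k)
  -- ⟪T i, φ k⟫ = √λ_k q_k^i
  have hTφ : ∀ i k, ⟪T i, φ k⟫ = Real.sqrt (lam k) * q k i := by
    intro i k
    by_cases hk : 0 < lam k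
    · have hne : Real.sqrt (lam k) ≠ 0 := ne_of_gt (Real.sqrt_pos.mpr hk)
      rw [hφ k, if_pos hk, real_inner_smul_right, inner_sum]
      have e : ∀ j, ⟪T i, q k j • T j⟫ = C i j * q k j := fun j => by
        rw [real_inner_smul_right, hC]; ring
      rw [Finset.sum_congr rfl fun j _ => e j, hCq k i]
      field_simp
      linear_combination (-(q k i)) * hslsq k
    · rw [hφ0 k hk, inner_zero_right]
      rw [hlam0 k hk, Real.sqrt_zero, zero_mul]
  -- gram of the φ family
  have hφφ : ∀ k l, ⟪φ k, φ l⟫ = if k = l ∧ 0 < lam k then 1 else 0 := by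
    intro k l
    by_cases hk : 0 < lam k
    · by_cases hl : 0 < lam l
      · rw [hφ k, if_pos hk, hφ l, if_pos hl, real_inner_smul_left, real_inner_smul_right,
          hip k l]
        by_cases hkl : k = l
        · subst hkl
          rw [if_pos rfl, if_pos (show k = k ∧ 0 < lam k from ⟨rfl, hk⟩), mul_one, ← hslsq k]
          have hne : Real.sqrt (lam k) ≠ 0 := ne_of_gt (Real.sqrt_pos.mpr hk)
          field_simp
          rw [Real.sqrt_sq (Real.sqrt_nonneg _)]
        · rw [if_neg hkl, if_neg (fun h => hkl h.1)]; ring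
      · rw [hφ0 l hl, inner_zero_right, if_neg]
        rintro ⟨rfl, h⟩; exact hl h
    · rw [hφ0 k hk, inner_zero_left, if_neg (fun h => hk h.2)]
  have hO1 : ∀ a b : Fin Ns, a ≠ b → ⟪φ a, φ b⟫ = 0 := by
    intro a b hab; rw [hφφ, if_neg (fun h => hab h.1)]
  have hO2 : ∀ a : Fin Ns, ⟪φ a, φ a⟫ = 1 ∨ φ a = 0 := by
    intro a
    by_cases h : 0 < lam a
    · left; rw [hφφ, if_pos ⟨rfl, h⟩]
    · right; exact hφ0 a h
  -- Q Qᵀ = 1 implies Qᵀ Q = 1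
  have hQQ : ∀ i j, (∑ k, q k i * q k j) = if i = j then (1 : ℝ) else 0 := by
    set Q : Matrix (Fin Ns) (Fin Ns) ℝ := Matrix.of fun k j => q k j with hQ
    have hQ1 : Q * Q.transpose = 1 := by
      ext k l
      simp only [Matrix.mul_apply, Matrix.transpose_apply, Matrix.one_apply, hQ, Matrix.of_apply]
      rw [horth k l]
    have hQ2 : Q.transpose * Q = 1 := mul_eq_one_comm.mp hQ1
    intro i j
    have h := congrFun (congrFun hQ2 i) j
    simpa [Matrix.mul_apply, Matrix.transpose_apply, Matrix.one_apply, hQ,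
      Matrix.of_apply] using h
  -- key identity: snapshots expand in the φ family
  have hB : ∀ i, T i = ∑ k, (Real.sqrt (lam k) * q k i) • φ k := by
    intro i
    have term : ∀ k, (Real.sqrt (lam k) * q k i) • φ k
        = q k i • (∑ j, q k j • T j : H) := by
      intro k
      by_cases hk : 0 < lam k
      · rw [hφ k, if_pos hk, smul_smul]
        congr 1
        have hne : Real.sqrt (lam k) ≠ 0 := ne_of_gt (Real.sqrt_pos.mpr hk)
        field_simp
      · rw [hφ0 k hk, smul_zero, hzero k (hlam0 k hk), smul_zero]
    symm
    calc ∑ k, (Real.sqrt (lam k) * q k i) • φ k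
        = ∑ k, ∑ j, (q k i * q k j) • T j := by
          refine Finset.sum_congr rfl fun k _ => ?_
          rw [term k, Finset.smul_sum]
          exact Finset.sum_congr rfl fun j _ => (smul_smul _ _ _)
      _ = ∑ j, (∑ k, q k i * q k j) • T j := by
          rw [Finset.sum_comm]
          exact Finset.sum_congr rfl fun j _ => (Finset.sum_smul).symm
      _ = T i := by
          simp only [hQQ, ite_smul, one_smul, zero_smul]
          rw [Finset.sum_ite_eq]
          simp
  -- norms of the snapshots
  have hnormT : ∀ i, ‖T i‖ ^ 2 = ∑ k, lam k * (q k i) ^ 2 := by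
    intro i
    have h2 : ⟪T i, T i⟫ = ⟪T i, ∑ k, (Real.sqrt (lam k) * q k i) • φ k⟫ :=
      congrArg (fun x : H => ⟪T i, x⟫) (hB i)
    rw [← real_inner_self_eq_norm_sq, h2, inner_sum]
    refine Finset.sum_congr rfl fun k _ => ?_
    rw [real_inner_smul_right, hTφ]
    linear_combination (q k i ^ 2) * hslsq k
  have hqnorm : ∀ k, ∑ i, (q k i) ^ 2 = 1 := by
    intro k
    have h := horth k k
    rw [if_pos rfl] at h
    rw [← h]
    exact Finset.sum_congr rfl fun i _ => pow_two _
  have htrace : ∑ i, ‖T i‖ ^ 2 = ∑ k, lam k := by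
    calc ∑ i, ‖T i‖ ^ 2 = ∑ i, ∑ k, lam k * (q k i) ^ 2 :=
          Finset.sum_congr rfl fun i _ => hnormT i
      _ = ∑ k, ∑ i, lam k * (q k i) ^ 2 := Finset.sum_comm
      _ = ∑ k, lam k := Finset.sum_congr rfl fun k _ => by
          rw [← Finset.mul_sum, hqnorm k, mul_one]
  have hsumsq : ∀ k, ∑ i, ⟪T i, φ k⟫ ^ 2 = lam k := by
    intro k
    calc ∑ i, ⟪T i, φ k⟫ ^ 2 = ∑ i, lam k * (q k i) ^ 2 := by
          refine Finset.sum_congr rfl fun i _ => ?_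
          rw [hTφ]
          linear_combination (q k i ^ 2) * hslsq k
      _ = lam k := by rw [← Finset.mul_sum, hqnorm k, mul_one]
  -- part 1
  have hfilter : Finset.univ.filter (fun k : Fin Ns => ¬ (k : ℕ) < N)
      = Finset.univ.filter (fun k : Fin Ns => N ≤ (k : ℕ)) := by
    ext k; simp [not_lt]
  have hsplitlam := Finset.sum_filter_add_sum_filter_not Finset.univ
      (fun k : Fin Ns => (k : ℕ) < N) lam
  rw [hfilter] at hsplitlam
  have part1 : ∑ i, ‖T i - ∑ k ∈ Finset.univ.filter (fun k : Fin Ns => (k : ℕ) < N),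
      ⟪T i, φ k⟫ • φ k‖ ^ 2
      = ∑ k ∈ Finset.univ.filter (fun k : Fin Ns => N ≤ (k : ℕ)), lam k := by
    have e : ∀ i, ‖T i - ∑ k ∈ Finset.univ.filter (fun k : Fin Ns => (k : ℕ) < N),
        ⟪T i, φ k⟫ • φ k‖ ^ 2
        = ‖T i‖ ^ 2 - ∑ k ∈ Finset.univ.filter (fun k : Fin Ns => (k : ℕ) < N),
            ⟪T i, φ k⟫ ^ 2 :=
      fun i => pod_pyth _ φ (fun a _ b _ hab => hO1 a b hab) (fun a _ => hO2 a) (T i)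
    calc ∑ i, ‖T i - ∑ k ∈ Finset.univ.filter (fun k : Fin Ns => (k : ℕ) < N),
          ⟪T i, φ k⟫ • φ k‖ ^ 2
        = ∑ i, (‖T i‖ ^ 2 - ∑ k ∈ Finset.univ.filter (fun k : Fin Ns => (k : ℕ) < N),
            ⟪T i, φ k⟫ ^ 2) := Finset.sum_congr rfl fun i _ => e i
      _ = (∑ i, ‖T i‖ ^ 2) - ∑ i, ∑ k ∈ Finset.univ.filter (fun k : Fin Ns => (k : ℕ) < N),
            ⟪T i, φ k⟫ ^ 2 := Finset.sum_sub_distrib _ _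
      _ = (∑ k, lam k) - ∑ k ∈ Finset.univ.filter (fun k : Fin Ns => (k : ℕ) < N),
            ∑ i, ⟪T i, φ k⟫ ^ 2 := by rw [htrace, Finset.sum_comm]
      _ = (∑ k, lam k) - ∑ k ∈ Finset.univ.filter (fun k : Fin Ns => (k : ℕ) < N), lam k := by
            rw [Finset.sum_congr rfl fun k _ => hsumsq k]
      _ = ∑ k ∈ Finset.univ.filter (fun k : Fin Ns => N ≤ (k : ℕ)), lam k := by
            linarith [hsplitlam]
  refine ⟨part1, ?_⟩
  -- part 2
  intro ψ hψ
  rw [part1]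
  have hψ' : ∀ a b, ⟪ψ a, ψ b⟫ = if a = b then (1 : ℝ) else 0 := orthonormal_iff_ite.mp hψ
  have hOψ1 : ∀ a ∈ (Finset.univ : Finset (Fin N)), ∀ b ∈ (Finset.univ : Finset (Fin N)),
      a ≠ b → ⟪ψ a, ψ b⟫ = 0 := fun a _ b _ hab => by rw [hψ' a b, if_neg hab]
  have hOψ2 : ∀ a ∈ (Finset.univ : Finset (Fin N)), ⟪ψ a, ψ a⟫ = 1 ∨ ψ a = 0 :=
    fun a _ => Or.inl (by rw [hψ' a a, if_pos rfl])
  -- expansion of ψ-projection error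
  have eψ : ∀ i, ‖T i - ∑ m : Fin N, ⟪T i, ψ m⟫ • ψ m‖ ^ 2
      = ‖T i‖ ^ 2 - ∑ m : Fin N, ⟪T i, ψ m⟫ ^ 2 :=
    fun i => pod_pyth Finset.univ ψ hOψ1 hOψ2 (T i)
  -- key: ∑_i ⟪T i, ψ m⟫² = ∑_k λ_k ⟪φ k, ψ m⟫²
  have key1 : ∀ m, ∑ i, ⟪T i, ψ m⟫ ^ 2 = ∑ k, lam k * ⟪φ k, ψ m⟫ ^ 2 := by
    intro m
    have hT : ∀ i, ⟪T i, ψ m⟫ = ∑ k, (Real.sqrt (lam k) * q k i) * ⟪φ k, ψ m⟫ := by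
      intro i
      have h2 : ⟪T i, ψ m⟫ = ⟪(∑ k, (Real.sqrt (lam k) * q k i) • φ k : H), ψ m⟫ :=
        congrArg (fun x : H => ⟪x, ψ m⟫) (hB i)
      rw [h2, sum_inner]
      exact Finset.sum_congr rfl fun k _ => real_inner_smul_left _ _ _
    calc ∑ i, ⟪T i, ψ m⟫ ^ 2
        = ∑ i, ∑ k, ∑ l, ((Real.sqrt (lam k) * q k i) * ⟪φ k, ψ m⟫)
            * ((Real.sqrt (lam l) * q l i) * ⟪φ l, ψ m⟫) := by
          refine Finset.sum_congr rfl fun i _ => ?_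
          rw [hT i, pow_two, Finset.sum_mul_sum]
      _ = ∑ k, ∑ l, ((Real.sqrt (lam k) * ⟪φ k, ψ m⟫) * (Real.sqrt (lam l) * ⟪φ l, ψ m⟫))
            * ∑ i, q k i * q l i := by
          rw [Finset.sum_comm]
          refine Finset.sum_congr rfl fun k _ => ?_
          rw [Finset.sum_comm]
          refine Finset.sum_congr rfl fun l _ => ?_
          rw [Finset.mul_sum]
          exact Finset.sum_congr rfl fun i _ => by ring
      _ = ∑ k, lam k * ⟪φ k, ψ m⟫ ^ 2 := by
          refine Finset.sum_congr rfl fun k _ => ?_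
          rw [Finset.sum_eq_single k]
          · rw [horth k k, if_pos rfl, mul_one]
            linear_combination (⟪φ k, ψ m⟫ ^ 2) * hslsq k
          · intro l _ hlk
            rw [horth k l, if_neg (fun h => hlk h.symm), mul_zero]
          · intro h; exact absurd (Finset.mem_univ k) h
  -- Bessel coefficients
  set b : Fin Ns → ℝ := fun k => ∑ m : Fin N, ⟪φ k, ψ m⟫ ^ 2 with hbdef
  have hb0 : ∀ k, 0 ≤ b k := fun k => Finset.sum_nonneg fun m _ => sq_nonneg _
  have hb1 : ∀ k, b k ≤ 1 := by
    intro k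
    have h := pod_bessel Finset.univ ψ hOψ1 hOψ2 (φ k)
    have h2 : ‖φ k‖ ^ 2 ≤ 1 := by
      rw [← real_inner_self_eq_norm_sq]
      rcases hO2 k with h' | h'
      · rw [h']
      · rw [h', inner_zero_left]; norm_num
    exact le_trans h h2
  have hbsum : ∑ k, b k ≤ (N : ℝ) := by
    calc ∑ k, b k = ∑ m : Fin N, ∑ k, ⟪φ k, ψ m⟫ ^ 2 := Finset.sum_comm
      _ ≤ ∑ m : Fin N, (1 : ℝ) := by
          refine Finset.sum_le_sum fun m _ => ?_
          have h := pod_bessel Finset.univ φ (fun a _ b' _ hab => hO1 a b' hab)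
            (fun a _ => hO2 a) (ψ m)
          have hn : ‖ψ m‖ ^ 2 = 1 := by
            rw [← real_inner_self_eq_norm_sq, hψ' m m, if_pos rfl]
          calc ∑ k, ⟪φ k, ψ m⟫ ^ 2 = ∑ k, ⟪ψ m, φ k⟫ ^ 2 :=
                Finset.sum_congr rfl fun k _ => by rw [real_inner_comm]
            _ ≤ ‖ψ m‖ ^ 2 := h
            _ = 1 := hn
      _ = (N : ℝ) := by simp
  -- threshold value
  set t : ℝ := if h : N < Ns then lam ⟨N, h⟩ else 0 with htdef
  have ht0 : 0 ≤ t := by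
    rw [htdef]; split
    · exact hlam _
    · exact le_refl 0
  have hlt : ∀ k : Fin Ns, (k : ℕ) < N → t ≤ lam k := by
    intro k hk
    rw [htdef]
    by_cases h : N < Ns
    · rw [dif_pos h]
      exact hord k ⟨N, h⟩ (Fin.le_def.mpr (le_of_lt hk))
    · rw [dif_neg h]; exact hlam k
  have hge : ∀ k : Fin Ns, N ≤ (k : ℕ) → lam k ≤ t := by
    intro k hk
    have h : N < Ns := lt_of_le_of_lt hk k.isLt
    rw [htdef, dif_pos h]
    exact hord ⟨N, h⟩ k (Fin.le_def.mpr hk)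
  -- rearrangement bound
  have hcard : (Finset.univ.filter fun k : Fin Ns => (k : ℕ) < N).card = N :=
    pod_card_filter Ns N hN
  have hsplitb := Finset.sum_filter_add_sum_filter_not Finset.univ
      (fun k : Fin Ns => (k : ℕ) < N) b
  have hsplitlb := Finset.sum_filter_add_sum_filter_not Finset.univ
      (fun k : Fin Ns => (k : ℕ) < N) (fun k => lam k * b k)
  have hmain : ∑ k, lam k * b k
      ≤ ∑ k ∈ Finset.univ.filter (fun k : Fin Ns => (k : ℕ) < N), lam k := by
    have h1 : ∑ k ∈ Finset.univ.filter (fun k : Fin Ns => (k : ℕ) < N), lam k * b k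
        ≤ ∑ k ∈ Finset.univ.filter (fun k : Fin Ns => (k : ℕ) < N), (lam k + t * (b k - 1)) := by
      refine Finset.sum_le_sum fun k hk => ?_
      have hk' : (k : ℕ) < N := (Finset.mem_filter.mp hk).2
      nlinarith [hlt k hk', hb1 k, hb0 k]
    have h2 : ∑ k ∈ Finset.univ.filter (fun k : Fin Ns => ¬ (k : ℕ) < N), lam k * b k
        ≤ ∑ k ∈ Finset.univ.filter (fun k : Fin Ns => ¬ (k : ℕ) < N), t * b k := by
      refine Finset.sum_le_sum fun k hk => ?_
      have hk' : N ≤ (k : ℕ) := not_lt.mp (Finset.mem_filter.mp hk).2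
      nlinarith [hge k hk', hb0 k, hlam k]
    have h3 : ∑ k ∈ Finset.univ.filter (fun k : Fin Ns => (k : ℕ) < N), (lam k + t * (b k - 1))
        = (∑ k ∈ Finset.univ.filter (fun k : Fin Ns => (k : ℕ) < N), lam k)
          + t * ((∑ k ∈ Finset.univ.filter (fun k : Fin Ns => (k : ℕ) < N), b k) - N) := by
      rw [Finset.sum_add_distrib, ← Finset.mul_sum, Finset.sum_sub_distrib,
        Finset.sum_const, hcard]
      simp [mul_comm]
    have h4 : ∑ k ∈ Finset.univ.filter (fun k : Fin Ns => ¬ (k : ℕ) < N), t * b k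
        = t * ∑ k ∈ Finset.univ.filter (fun k : Fin Ns => ¬ (k : ℕ) < N), b k :=
      (Finset.mul_sum _ _ _).symm
    have h6 : t * (((∑ k ∈ Finset.univ.filter (fun k : Fin Ns => (k : ℕ) < N), b k) - N)
        + ∑ k ∈ Finset.univ.filter (fun k : Fin Ns => ¬ (k : ℕ) < N), b k) ≤ 0 := by
      apply mul_nonpos_of_nonneg_of_nonpos ht0
      linarith [hsplitb, hbsum]
    nlinarith [h1, h2, h3, h4, h6, hsplitlb]
  -- assemble part 2
  calc ∑ k ∈ Finset.univ.filter (fun k : Fin Ns => N ≤ (k : ℕ)), lam k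
      = (∑ k, lam k) - ∑ k ∈ Finset.univ.filter (fun k : Fin Ns => (k : ℕ) < N), lam k := by
        linarith [hsplitlam]
    _ ≤ (∑ k, lam k) - ∑ k, lam k * b k := by linarith [hmain]
    _ = ∑ i, ‖T i - ∑ m : Fin N, ⟪T i, ψ m⟫ • ψ m‖ ^ 2 := by
        have e1 : ∑ i, ‖T i - ∑ m : Fin N, ⟪T i, ψ m⟫ • ψ m‖ ^ 2
            = (∑ i, ‖T i‖ ^ 2) - ∑ i, ∑ m : Fin N, ⟪T i, ψ m⟫ ^ 2 := by
          rw [Finset.sum_congr rfl fun i _ => eψ i, Finset.sum_sub_distrib]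
        have e2 : ∑ i, ∑ m : Fin N, ⟪T i, ψ m⟫ ^ 2 = ∑ k, lam k * b k := by
          calc ∑ i, ∑ m : Fin N, ⟪T i, ψ m⟫ ^ 2
              = ∑ m : Fin N, ∑ i, ⟪T i, ψ m⟫ ^ 2 := Finset.sum_comm
            _ = ∑ m : Fin N, ∑ k, lam k * ⟪φ k, ψ m⟫ ^ 2 :=
                Finset.sum_congr rfl fun m _ => key1 m
            _ = ∑ k, ∑ m : Fin N, lam k * ⟪φ k, ψ m⟫ ^ 2 := Finset.sum_comm
            _ = ∑ k, lam k * b k := Finset.sum_congr rfl fun k _ => (Finset.mul_sum _ _ _).symm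
        rw [e1, e2, htrace]
end

section
/- (Supremizer enrichment guarantees inf-sup.) Let V, Q be finite-dimensional inner product spaces, b : V × Q → ℝ bilinear, and for each basis element χ_i of a reduced pressure space Q_r ⊂ Q let the supremizer s_i ∈ V be defined by ⟨s_i, v⟩_V = b(v, χ_i) for all v ∈ V. If the reduced velocity space V_r contains all supremizers s_1,…,s_m and the s_i are linearly independent, then the reduced inf-sup constant is positive: inf_{q ∈ Q_r, q≠0} sup_{v ∈ V_r, v≠0} b(v,q)/(‖v‖_V ‖q‖_Q) > 0. -/
open scoped RealInnerProductSpace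

/-- Supremizer enrichment guarantees a positive reduced inf-sup constant: if
the reduced velocity space `V_r` contains the (linearly independent)
supremizers `s_i`, i.e. the Riesz representatives of `v ↦ b(v, χ_i)` for a
basis `χ_i` of the reduced pressure space `Q_r`, then
`inf_{q ∈ Q_r, q ≠ 0} sup_{v ∈ V_r, v ≠ 0} b(v,q)/(‖v‖‖q‖) > 0`. -/
theorem supremizer_enrichment_infsup
    {V Q : Type*}
    [NormedAddCommGroup V] [InnerProductSpace ℝ V] [FiniteDimensional ℝ V]
    [NormedAddCommGroup Q] [InnerProductSpace ℝ Q] [FiniteDimensional ℝ Q]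
    (b : V →ₗ[ℝ] Q →ₗ[ℝ] ℝ)
    (m : ℕ) (χ : Fin m → Q) (hχ : LinearIndependent ℝ χ)
    (Qr : Submodule ℝ Q) (hQr : Qr = Submodule.span ℝ (Set.range χ))
    (s : Fin m → V)
    (hs : ∀ i, ∀ v : V, ⟪s i, v⟫ = b v (χ i))
    (hsind : LinearIndependent ℝ s)
    (Vr : Submodule ℝ V) (hVr : ∀ i, s i ∈ Vr) :
    ∃ β : ℝ, 0 < β ∧ ∀ q ∈ Qr, q ≠ 0 →
      ∃ v ∈ Vr, v ≠ 0 ∧ β * ‖v‖ * ‖q‖ ≤ b v q := by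
  subst hQr
  set B : Module.Basis (Fin m) ℝ (Submodule.span ℝ (Set.range χ)) := Module.Basis.span hχ with hB
  set S : Submodule.span ℝ (Set.range χ) →ₗ[ℝ] V := B.constr ℝ s with hS
  -- key reproducing property
  have key : ∀ q : Submodule.span ℝ (Set.range χ), ∀ v : V, ⟪S q, v⟫ = b v (q : Q) := by
    intro q v
    have hrepr : ∀ q : Submodule.span ℝ (Set.range χ),
        (q : Q) = ∑ i, B.repr q i • χ i := by
      intro q
      conv_lhs => rw [← B.sum_repr q]
      push_cast
      refine Finset.sum_congr rfl fun i _ => ?_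
      rw [Module.Basis.span_apply]
    rw [hS, B.constr_apply_fintype ℝ, hrepr q, map_sum, sum_inner]
    simp only [real_inner_smul_left, map_smul, LinearMap.smul_apply, Module.Basis.equivFun_apply]
    exact Finset.sum_congr rfl fun i _ => by rw [hs i v, smul_eq_mul]
  -- S is injective
  have hinj : LinearMap.ker S = ⊥ := by
    rw [LinearMap.ker_eq_bot]
    intro q q' h
    have h1 : ∀ q : Submodule.span ℝ (Set.range χ), S q = ∑ i, B.repr q i • s i :=
      fun q => B.constr_apply_fintype ℝ s q
    have h2 : ∑ i, B.repr q i • s i = ∑ i, B.repr q' i • s i := by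
      rw [← h1, ← h1, h]
    have h3 : B.repr q = B.repr q' := by
      ext i
      have := Fintype.linearIndependent_iff.mp hsind (fun i => B.repr q i - B.repr q' i)
        (by simp [sub_smul, Finset.sum_sub_distrib, h2]) i
      linarith [this]
    exact B.repr.injective h3
  obtain ⟨K, hK, hKa⟩ := S.exists_antilipschitzWith hinj
  refine ⟨(K : ℝ)⁻¹, by positivity, ?_⟩
  intro q hq hq0
  set qr : Submodule.span ℝ (Set.range χ) := ⟨q, hq⟩ with hqr
  refine ⟨S qr, ?_, ?_, ?_⟩
  · rw [hS, B.constr_apply_fintype ℝ]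
    exact Submodule.sum_mem _ fun i _ => Submodule.smul_mem _ _ (hVr i)
  · intro h0
    have : qr = 0 := by
      have := LinearMap.ker_eq_bot.mp hinj
      exact this (by simpa using h0)
    exact hq0 (by simpa [hqr] using congrArg Subtype.val this)
  · have hb : b (S qr) q = ‖S qr‖ ^ 2 := by
      rw [← key qr (S qr)]
      exact (real_inner_self_eq_norm_sq _)
    have hnq : ‖q‖ ≤ K * ‖S qr‖ := by
      have := hKa.le_mul_dist qr 0
      simpa [dist_eq_norm, hqr] using this
    rw [hb]
    have hS0 : (0:ℝ) ≤ ‖S qr‖ := norm_nonneg _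
    have : (K:ℝ)⁻¹ * ‖q‖ ≤ ‖S qr‖ := by
      rw [inv_mul_le_iff₀ (by exact_mod_cast hK)]
      linarith
    calc (K:ℝ)⁻¹ * ‖S qr‖ * ‖q‖ = ‖S qr‖ * ((K:ℝ)⁻¹ * ‖q‖) := by ring
      _ ≤ ‖S qr‖ * ‖S qr‖ := by
          exact mul_le_mul_of_nonneg_left this hS0
      _ = ‖S qr‖ ^ 2 := by ring
end
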